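/- Let m and n be integers with 1 ≤ n ≤ m, let q ∈ (0,1), set ℓ = m−n+1, and let C ∈ C_n(S_{m+1}). (a) If C contains no rook in column 0, then q^{−circ(C)} = q^{−circ(Ĉ)}, where Ĉ = {(c−1, r+1) : (c,r) ∈ C} (the unique predecessor of C under waiting). (b) If C contains a rook (0, ρ) in column 0, then q^{−circ(C)} = Σ_{c*} q^{−circ(C*(c*))} · ((1−q)/(1−q^ℓ)) · q^{ρ − s}, where s = |{(c,r) ∈ C : r < ρ}|, the sum ranges over all c* ∈ {0,...,m−1} with c* ∉ {c−1 : (c,r) ∈ C ∖ {(0,ρ)}}, and C*(c*) = {(c−1, r+1) : (c,r) ∈ C ∖ {(0,ρ)}} ∪ {(c*, 0)} are the predecessors of C under a throw. (Hence the measure proportional to q^{−circ(C)} solves the stationarity equation of the extended bounded geometric juggling process, in which the rook thrown from the bottom row lands in column 0 at the (ξ+1)-th vacant row counted from the bottom, with ξ distributed as an ℓ-truncated geometric distribution with parameter q.) -/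

import Mathlib

noncomputable section

/-- The staircase Ferrers board `S_{m+1}`: cells `(c, r)` with `c + r ≤ m - 1`
(equivalently `c + r < m`). -/
def board (m : ℕ) : Finset (ℕ × ℕ) :=
  (Finset.range m ×ˢ Finset.range m).filter (fun p => p.1 + p.2 < m)

/-- `C_n(S_{m+1})`: configurations of `n` non-attacking rooks on the staircase board
`S_{m+1}`. -/
def configs (m n : ℕ) : Finset (Finset (ℕ × ℕ)) :=
  ((board m).powersetCard n).filter
    (fun C => (∀ p ∈ C, ∀ p' ∈ C, p.1 = p'.1 → p = p') ∧
      ∀ p ∈ C, ∀ p' ∈ C, p.2 = p'.2 → p = p')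

/-- The statistic `circ(C)` on the board `S_{m+1}`. -/
def circ (m : ℕ) (C : Finset (ℕ × ℕ)) : ℕ :=
  ((board m).filter (fun p =>
    (∃ p₀ ∈ C, p₀.2 = p.2 ∧ p₀.1 < p.1) ∧ ¬∃ p₀ ∈ C, p₀.1 = p.1 ∧ p.2 < p₀.2)).card

open Finset

lemma mem_board {m : ℕ} {p : ℕ × ℕ} : p ∈ board m ↔ p.1 + p.2 < m := by
  simp only [board, mem_filter, mem_product, mem_range]; omega

def cset (m : ℕ) (D : Finset (ℕ × ℕ)) (p : ℕ × ℕ) : Finset ℕ :=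
  (Finset.Ioo p.1 (m - p.2)).filter (fun x => ¬∃ p' ∈ D, p'.1 = x ∧ p.2 < p'.2)

lemma circ_eq_sum (m : ℕ) (D : Finset (ℕ × ℕ)) (hD : D ⊆ board m)
    (hrow : ∀ p ∈ D, ∀ p' ∈ D, p.2 = p'.2 → p = p') :
    circ m D = ∑ p ∈ D, (cset m D p).card := by
  have hset : (board m).filter (fun p =>
      (∃ p₀ ∈ D, p₀.2 = p.2 ∧ p₀.1 < p.1) ∧ ¬∃ p₀ ∈ D, p₀.1 = p.1 ∧ p.2 < p₀.2)
      = D.biUnion (fun p => (cset m D p).image (fun x => (x, p.2))) := by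
    ext ⟨x, r⟩
    simp only [mem_filter, mem_biUnion, mem_image, cset, Finset.mem_Ioo, mem_board]
    constructor
    · rintro ⟨hb, ⟨p₀, hp₀, hpr, hpx⟩, hnb⟩
      exact ⟨p₀, hp₀, x, ⟨⟨hpx, by omega⟩, by rw [hpr]; exact hnb⟩, by rw [hpr]⟩
    · rintro ⟨p, hp, y, ⟨⟨h1, h2⟩, h3⟩, heq⟩
      rw [Prod.mk.injEq] at heq
      obtain ⟨rfl, rfl⟩ := heq
      have hb := mem_board.mp (hD hp)
      exact ⟨by omega, ⟨p, hp, rfl, h1⟩, h3⟩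
  rw [circ, hset, card_biUnion]
  · refine Finset.sum_congr rfl fun p hp => ?_
    exact card_image_of_injective _ (fun a b h => by simpa using congrArg Prod.fst h)
  · intro p hp p' hp' hne
    refine Finset.disjoint_left.mpr ?_
    rintro ⟨a, b⟩ ha hb
    simp only [mem_image] at ha hb
    obtain ⟨y, _, hy⟩ := ha; obtain ⟨y', _, hy'⟩ := hb
    refine hne (hrow p hp p' hp' ?_)
    have h1 : p.2 = b := congrArg Prod.snd hy
    have h2 : p'.2 = b := congrArg Prod.snd hy'
    omega

lemma cset_shift (m : ℕ) (D : Finset (ℕ × ℕ)) (hD : D ⊆ board m)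
    (hcol1 : ∀ p ∈ D, 1 ≤ p.1) (p : ℕ × ℕ) (hp : p ∈ D) :
    (cset m (D.image (fun p => (p.1 - 1, p.2 + 1))) ((fun p => (p.1 - 1, p.2 + 1)) p)).card
      = (cset m D p).card := by
  have hb := mem_board.mp (hD hp)
  have hp1 := hcol1 p hp
  refine Finset.card_nbij' (fun y => y + 1) (fun x => x - 1) ?_ ?_
    (fun a _ => by show a + 1 - 1 = a; omega) ?_
  · intro y hy
    simp only [cset, mem_coe, mem_filter, mem_Ioo, mem_image] at hy ⊢
    obtain ⟨⟨hy1, hy2⟩, hy3⟩ := hy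
    refine ⟨⟨by omega, by omega⟩, ?_⟩
    rintro ⟨p'', hp'', h1, h2⟩
    exact hy3 ⟨(p''.1 - 1, p''.2 + 1), ⟨p'', hp'', rfl⟩, by omega, by omega⟩
  · intro x hx
    simp only [cset, mem_coe, mem_filter, mem_Ioo, mem_image] at hx ⊢
    obtain ⟨⟨hx1, hx2⟩, hx3⟩ := hx
    refine ⟨⟨by omega, by omega⟩, ?_⟩
    rintro ⟨p', ⟨p'', hp'', rfl⟩, h1, h2⟩
    have := hcol1 p'' hp''
    exact hx3 ⟨p'', hp'', by simp at h1 h2 ⊢; omega, by simp at h2; omega⟩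
  · intro a ha
    simp only [cset, mem_coe, mem_filter, mem_Ioo] at ha
    show a - 1 + 1 = a
    omega

lemma circ_shift (m : ℕ) (D : Finset (ℕ × ℕ)) (hD : D ⊆ board m)
    (hcol1 : ∀ p ∈ D, 1 ≤ p.1)
    (hrow : ∀ p ∈ D, ∀ p' ∈ D, p.2 = p'.2 → p = p') :
    circ m (D.image (fun p => (p.1 - 1, p.2 + 1))) = circ m D := by
  have hD' : D.image (fun p => (p.1 - 1, p.2 + 1)) ⊆ board m := by
    intro p' hp'
    simp only [mem_image] at hp'
    obtain ⟨p, hp, rfl⟩ := hp'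
    have hb := mem_board.mp (hD hp)
    have := hcol1 p hp
    exact mem_board.mpr (by simp; omega)
  have hrow' : ∀ p ∈ D.image (fun p => (p.1 - 1, p.2 + 1)),
      ∀ p' ∈ D.image (fun p => (p.1 - 1, p.2 + 1)), p.2 = p'.2 → p = p' := by
    intro p hp p' hp' h
    simp only [mem_image] at hp hp'
    obtain ⟨a, ha, rfl⟩ := hp; obtain ⟨b, hb, rfl⟩ := hp'
    have : a = b := hrow a ha b hb (by simpa using h)
    rw [this]
  have hinj : ∀ p ∈ D, ∀ p' ∈ D,
      (fun p : ℕ × ℕ => (p.1 - 1, p.2 + 1)) p = (fun p : ℕ × ℕ => (p.1 - 1, p.2 + 1)) p'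
      → p = p' := by
    intro p hp p' hp' h
    exact hrow p hp p' hp' (by simpa using congrArg Prod.snd h)
  rw [circ_eq_sum m _ hD' hrow', circ_eq_sum m D hD hrow, Finset.sum_image hinj]
  exact Finset.sum_congr rfl fun p hp => cset_shift m D hD hcol1 p hp

lemma cset_insert (m : ℕ) (a : ℕ × ℕ) (D : Finset (ℕ × ℕ)) (p : ℕ × ℕ)
    (h : ∀ x, p.1 < x → ¬(a.1 = x ∧ p.2 < a.2)) :
    cset m (insert a D) p = cset m D p := by
  unfold cset
  apply Finset.filter_congr
  intro x hx
  rw [mem_Ioo] at hx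
  constructor
  · rintro hni ⟨p', hp', hh⟩
    exact hni ⟨p', mem_insert_of_mem hp', hh⟩
  · rintro hni ⟨p', hp', hh⟩
    rcases mem_insert.mp hp' with rfl | hp'
    · exact h x hx.1 hh
    · exact hni ⟨p', hp', hh⟩


lemma row_top_count (m ρ : ℕ) (C : Finset (ℕ × ℕ)) (hCb : C ⊆ board m)
    (hcol : ∀ p ∈ C, ∀ p' ∈ C, p.1 = p'.1 → p = p') (hρ : (0, ρ) ∈ C) :
    (cset m C (0, ρ)).card + (C.filter (fun p => ρ < p.2)).card + ρ + 1 = m := by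
  have hρm : (0 : ℕ) + ρ < m := mem_board.mp (hCb hρ)
  have hcs : cset m C (0, ρ)
      = (Ioo 0 (m - ρ)).filter (fun x => ¬∃ p' ∈ C, p'.1 = x ∧ ρ < p'.2) := rfl
  have hsplit := Finset.card_filter_add_card_filter_not
    (s := Ioo 0 (m - ρ)) (p := fun x => ∃ p' ∈ C, p'.1 = x ∧ ρ < p'.2)
  have h2 : (C.filter (fun p => ρ < p.2)).card
      = ((Ioo 0 (m - ρ)).filter (fun x => ∃ p' ∈ C, p'.1 = x ∧ ρ < p'.2)).card := by
    apply Finset.card_bij (fun p _ => p.1)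
    · intro p hp
      rw [mem_filter] at hp
      obtain ⟨hp, hρ2⟩ := hp
      have hb := mem_board.mp (hCb hp)
      have hp1 : p.1 ≠ 0 := by
        intro h0
        have : p = (0, ρ) := hcol p hp (0, ρ) hρ h0
        rw [this] at hρ2; exact absurd hρ2 (lt_irrefl ρ)
      refine mem_filter.mpr ⟨mem_Ioo.mpr ⟨by omega, by omega⟩, p, hp, rfl, hρ2⟩
    · intro p₁ h₁ p₂ h₂ h
      exact hcol p₁ (mem_filter.mp h₁).1 p₂ (mem_filter.mp h₂).1 h
    · rintro x hx
      rw [mem_filter] at hx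
      obtain ⟨hx, p', hp', rfl, hρ'⟩ := hx
      exact ⟨p', mem_filter.mpr ⟨hp', hρ'⟩, rfl⟩
  rw [hcs, h2]
  rw [Nat.card_Ioo] at hsplit
  omega

lemma insert_zero_circ (m c' : ℕ) (hc' : c' < m) (E : Finset (ℕ × ℕ)) (hE : E ⊆ board m)
    (hrow1 : ∀ p ∈ E, 1 ≤ p.2)
    (hErow : ∀ p ∈ E, ∀ p' ∈ E, p.2 = p'.2 → p = p')
    (hEcol : ∀ p ∈ E, ∀ p' ∈ E, p.1 = p'.1 → p = p') :
    circ m (insert (c', 0) E) + (E.filter (fun p => c' < p.1)).card + c' + 1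
      = m + circ m E := by
  have hnotmem : (c', 0) ∉ E := fun h => by have := hrow1 _ h; simp at this
  have hsub : insert (c', 0) E ⊆ board m :=
    insert_subset (mem_board.mpr (by simp; omega)) hE
  have hrow' : ∀ p ∈ insert (c', 0) E, ∀ p' ∈ insert (c', 0) E, p.2 = p'.2 → p = p' := by
    intro p hp p' hp' h
    rcases mem_insert.mp hp with rfl | hp <;> rcases mem_insert.mp hp' with rfl | hp'
    · rfl
    · have := hrow1 p' hp'; simp at h; omega
    · have := hrow1 p hp; simp at h; omega
    · exact hErow p hp p' hp' h
  rw [circ_eq_sum m _ hsub hrow', Finset.sum_insert hnotmem]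
  have hterm : ∀ p ∈ E, cset m (insert (c', 0) E) p = cset m E p := by
    intro p hp
    apply cset_insert
    rintro x hx ⟨h1, h2⟩
    simp at h2
  rw [Finset.sum_congr rfl fun p hp => congrArg Finset.card (hterm p hp)]
  rw [← circ_eq_sum m E hE hErow]
  have heq : cset m (insert (c', 0) E) (c', 0)
      = (Ioo c' m).filter (fun x => ¬∃ p' ∈ E, p'.1 = x) := by
    show (Ioo c' (m - 0)).filter _ = _
    rw [Nat.sub_zero]
    apply Finset.filter_congr
    intro x hx
    apply not_congr
    constructor
    · rintro ⟨p', hp', h1, h2⟩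
      rcases mem_insert.mp hp' with rfl | hp'
      · simp at h2
      · exact ⟨p', hp', h1⟩
    · rintro ⟨p', hp', h1⟩
      exact ⟨p', mem_insert_of_mem hp', h1, hrow1 p' hp'⟩
  have hsplit := Finset.card_filter_add_card_filter_not
    (s := Ioo c' m) (p := fun x => ∃ p' ∈ E, p'.1 = x)
  have hk : (E.filter (fun p => c' < p.1)).card
      = ((Ioo c' m).filter (fun x => ∃ p' ∈ E, p'.1 = x)).card := by
    apply Finset.card_bij (fun p _ => p.1)
    · intro p hp
      rw [mem_filter] at hp
      obtain ⟨hp, hc⟩ := hp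
      have hb := mem_board.mp (hE hp)
      exact mem_filter.mpr ⟨mem_Ioo.mpr ⟨hc, by omega⟩, p, hp, rfl⟩
    · intro p₁ h₁ p₂ h₂ h
      exact hEcol p₁ (mem_filter.mp h₁).1 p₂ (mem_filter.mp h₂).1 h
    · rintro x hx
      rw [mem_filter] at hx
      obtain ⟨hx, p', hp', rfl⟩ := hx
      exact ⟨p', mem_filter.mpr ⟨hp', (mem_Ioo.mp hx).1⟩, rfl⟩
  rw [heq]
  rw [Nat.card_Ioo] at hsplit
  omega


lemma free_sum (m n : ℕ) (hn : 1 ≤ n) (hm : n ≤ m) (q : ℝ) (E : Finset (ℕ × ℕ))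
    (hEcard : E.card + 1 = n)
    (hEcolm : ∀ p ∈ E, p.1 < m)
    (hEcol : ∀ p ∈ E, ∀ p' ∈ E, p.1 = p'.1 → p = p') :
    ∑ c' ∈ (range m).filter (fun c' => c' ∉ E.image Prod.fst),
        q ^ (c' + (E.filter (fun p => c' < p.1)).card)
      = ∑ j ∈ Icc (n - 1) (m - 1), q ^ j := by
  set Free := (range m).filter (fun c' => c' ∉ E.image Prod.fst) with hFree
  set g := fun c' => c' + (E.filter (fun p => c' < p.1)).card with hg
  have hnotcol : ∀ c' ∈ Free, ∀ p ∈ E, p.1 ≠ c' := by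
    intro c' hc' p hp h
    have := (mem_filter.mp hc').2
    exact this (mem_image.mpr ⟨p, hp, h⟩)
  have hinjcol : Set.InjOn Prod.fst (E : Set (ℕ × ℕ)) := by
    intro a ha b hb h
    exact hEcol a ha b hb h
  -- bounds
  have hbound : ∀ c' ∈ Free, g c' ∈ Icc (n - 1) (m - 1) := by
    intro c' hc'
    have hc'm : c' < m := mem_range.mp (mem_filter.mp hc').1
    have hupper : (E.filter (fun p => c' < p.1)).card ≤ m - c' - 1 := by
      have : (E.filter (fun p => c' < p.1)).card ≤ (Ioo c' m).card := by
        apply Finset.card_le_card_of_injOn Prod.fst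
        · intro p hp
          rw [mem_coe, mem_filter] at hp
          exact mem_Ioo.mpr ⟨hp.2, hEcolm p hp.1⟩
        · intro a ha b hb h
          exact hinjcol (by exact_mod_cast (mem_filter.mp (by exact_mod_cast ha)).1)
            (by exact_mod_cast (mem_filter.mp (by exact_mod_cast hb)).1) h
      rw [Nat.card_Ioo] at this
      omega
    have hlowsplit := Finset.card_filter_add_card_filter_not
      (s := E) (p := fun p => c' < p.1)
    have hlow : (E.filter (fun p => ¬ c' < p.1)).card ≤ c' := by
      have : (E.filter (fun p => ¬ c' < p.1)).card ≤ (range c').card := by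
        apply Finset.card_le_card_of_injOn Prod.fst
        · intro p hp
          rw [mem_coe, mem_filter] at hp
          have := hnotcol c' hc' p hp.1
          have h2 := hp.2
          rw [mem_coe, mem_range]
          omega
        · intro a ha b hb h
          exact hinjcol (by exact_mod_cast (mem_filter.mp (by exact_mod_cast ha)).1)
            (by exact_mod_cast (mem_filter.mp (by exact_mod_cast hb)).1) h
      rw [Finset.card_range] at this
      exact this
    rw [mem_Icc]
    constructor
    · simp only [hg]; omega
    · simp only [hg]; omega
  -- strict monotonicity on Free
  have hmono : ∀ a ∈ Free, ∀ b ∈ Free, a < b → g a < g b := by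
    intro a ha b hb hab
    have hsplit := Finset.card_filter_add_card_filter_not
      (s := E.filter (fun p => a < p.1)) (p := fun p => b < p.1)
    rw [Finset.filter_filter, Finset.filter_filter] at hsplit
    have he1 : E.filter (fun p => a < p.1 ∧ b < p.1) = E.filter (fun p => b < p.1) := by
      apply Finset.filter_congr
      intro p _
      constructor
      · exact fun h => h.2
      · exact fun h => ⟨by omega, h⟩
    have hmid : (E.filter (fun p => a < p.1 ∧ ¬ b < p.1)).card ≤ b - a - 1 := by
      have : (E.filter (fun p => a < p.1 ∧ ¬ b < p.1)).card ≤ (Ioo a b).card := by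
        apply Finset.card_le_card_of_injOn Prod.fst
        · intro p hp
          rw [mem_coe, mem_filter] at hp
          have := hnotcol b hb p hp.1
          rw [mem_coe, mem_Ioo]
          omega
        · intro x hx y hy h
          exact hinjcol (by exact_mod_cast (mem_filter.mp (by exact_mod_cast hx)).1)
            (by exact_mod_cast (mem_filter.mp (by exact_mod_cast hy)).1) h
      rw [Nat.card_Ioo] at this
      omega
    rw [he1] at hsplit
    simp only [hg]
    omega
  have hginj : ∀ a ∈ Free, ∀ b ∈ Free, g a = g b → a = b := by
    intro a ha b hb h
    rcases lt_trichotomy a b with h' | h' | h'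
    · exact absurd h (Nat.ne_of_lt (hmono a ha b hb h'))
    · exact h'
    · exact absurd h.symm (Nat.ne_of_lt (hmono b hb a ha h'))
  -- cardinalities
  have hEim : (E.image Prod.fst) ⊆ range m := by
    intro x hx
    obtain ⟨p, hp, rfl⟩ := mem_image.mp hx
    exact mem_range.mpr (hEcolm p hp)
  have hFreecard : Free.card = m - n + 1 := by
    have h1 : Free = range m \ E.image Prod.fst := by
      rw [Finset.sdiff_eq_filter]
    rw [h1, Finset.card_sdiff_of_subset hEim, Finset.card_range,
      Finset.card_image_of_injOn hinjcol]
    omega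
  have himg : Free.image g = Icc (n - 1) (m - 1) := by
    apply Finset.eq_of_subset_of_card_le
    · intro x hx
      obtain ⟨c', hc', rfl⟩ := mem_image.mp hx
      exact hbound c' hc'
    · rw [Finset.card_image_of_injOn (fun a ha b hb h => hginj a ha b hb h),
        hFreecard, Nat.card_Icc]
      omega
  rw [← himg, Finset.sum_image hginj]

/-- The measure proportional to `q^{-circ(C)}` solves the stationarity equation of the
extended bounded geometric juggling process on `C_n(S_{m+1})` with `ℓ = m - n + 1`:
(a) if `C` has no rook in column `0`, then `q^{-circ(C)} = q^{-circ(Ĉ)}` where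
`Ĉ = {(c-1, r+1) : (c,r) ∈ C}` is the unique predecessor of `C` under waiting;
(b) if `C` has a rook `(0, ρ)`, then with `s = |{(c,r) ∈ C : r < ρ}|`,
`q^{-circ(C)} = Σ_{c*} q^{-circ(C*(c*))} * ((1-q)/(1-q^ℓ)) * q^(ρ-s)`, where `c*` ranges
over `{0, ..., m-1} \ {c-1 : (c,r) ∈ C \ {(0,ρ)}}` and
`C*(c*) = {(c-1, r+1) : (c,r) ∈ C \ {(0,ρ)}} ∪ {(c*, 0)}` are the predecessors of `C`
under a throw. -/
theorem circ_stationarity (m n : ℕ) (hn : 1 ≤ n) (hm : n ≤ m) (q : ℝ)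
    (hq : q ∈ Set.Ioo (0 : ℝ) 1) (C : Finset (ℕ × ℕ)) (hC : C ∈ configs m n) :
    ((¬∃ p ∈ C, p.1 = 0) →
      q ^ (-(circ m C : ℤ)) =
        q ^ (-(circ m (C.image (fun p => (p.1 - 1, p.2 + 1))) : ℤ))) ∧
    (∀ ρ : ℕ, (0, ρ) ∈ C →
      q ^ (-(circ m C : ℤ)) =
        ∑ c' ∈ (Finset.range m).filter
            (fun c' => c' ∉ (C.erase (0, ρ)).image (fun p => p.1 - 1)),
          q ^ (-(circ m (insert (c', 0)
              ((C.erase (0, ρ)).image (fun p => (p.1 - 1, p.2 + 1)))) : ℤ)) *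
            ((1 - q) / (1 - q ^ (m - n + 1))) *
            q ^ (ρ - ((C.filter (fun p => p.2 < ρ)).card))) := by
  obtain ⟨hq0, hq1⟩ := hq
  have hqne : q ≠ 0 := ne_of_gt hq0
  simp only [configs, Finset.mem_filter, Finset.mem_powersetCard] at hC
  obtain ⟨⟨hCb, hCcard⟩, hcol, hrow⟩ := hC
  constructor
  · intro h0
    have hcol1 : ∀ p ∈ C, 1 ≤ p.1 := by
      intro p hp
      rcases Nat.eq_zero_or_pos p.1 with h | h
      · exact absurd ⟨p, hp, h⟩ h0
      · exact h
    rw [circ_shift m C hCb hcol1 hrow]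
  · intro ρ hρ
    set sh : ℕ × ℕ → ℕ × ℕ := fun p => (p.1 - 1, p.2 + 1) with hsh
    set E₀ := C.erase (0, ρ) with hE₀
    set E := E₀.image sh with hE
    set s := (C.filter (fun p => p.2 < ρ)).card with hs
    set t := (C.filter (fun p => ρ < p.2)).card with ht
    have hρm : (0 : ℕ) + ρ < m := mem_board.mp (hCb hρ)
    have hE₀sub : E₀ ⊆ C := erase_subset _ _
    have hE₀b : E₀ ⊆ board m := hE₀sub.trans hCb
    have hE₀col1 : ∀ p ∈ E₀, 1 ≤ p.1 := by
      intro p hp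
      rcases Nat.eq_zero_or_pos p.1 with h | h
      · exfalso
        have hpc : p ∈ C := hE₀sub hp
        have hpp : p = (0, ρ) := hcol p hpc (0, ρ) hρ (by simpa using h)
        exact (mem_erase.mp hp).1 hpp
      · exact h
    have hE₀card : E₀.card + 1 = n := by
      rw [hE₀, card_erase_of_mem hρ, ← hCcard]
      have : 1 ≤ C.card := Finset.card_pos.mpr ⟨_, hρ⟩
      omega
    have hE₀row : ∀ p ∈ E₀, ∀ p' ∈ E₀, p.2 = p'.2 → p = p' :=
      fun p hp p' hp' h => hrow p (hE₀sub hp) p' (hE₀sub hp') h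
    have hE₀col : ∀ p ∈ E₀, ∀ p' ∈ E₀, p.1 = p'.1 → p = p' :=
      fun p hp p' hp' h => hcol p (hE₀sub hp) p' (hE₀sub hp') h
    have hshinj : ∀ p ∈ E₀, ∀ p' ∈ E₀, sh p = sh p' → p = p' := by
      intro p hp p' hp' h
      exact hE₀row p hp p' hp' (by simpa [hsh] using congrArg Prod.snd h)
    have hEb : E ⊆ board m := by
      intro p' hp'
      obtain ⟨p, hp, rfl⟩ := mem_image.mp hp'
      have hb := mem_board.mp (hE₀b hp)
      have := hE₀col1 p hp
      exact mem_board.mpr (by simp [hsh]; omega)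
    have hErow1 : ∀ p ∈ E, 1 ≤ p.2 := by
      intro p' hp'
      obtain ⟨p, hp, rfl⟩ := mem_image.mp hp'
      simp [hsh]
    have hErow : ∀ p ∈ E, ∀ p' ∈ E, p.2 = p'.2 → p = p' := by
      intro a ha b hb h
      obtain ⟨p, hp, rfl⟩ := mem_image.mp ha
      obtain ⟨p', hp', rfl⟩ := mem_image.mp hb
      rw [hshinj p hp p' hp' (hE₀row p hp p' hp' (by simpa [hsh] using h) ▸ rfl)]
    have hEcol : ∀ a ∈ E, ∀ b ∈ E, a.1 = b.1 → a = b := by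
      intro a ha b hb h
      obtain ⟨p, hp, rfl⟩ := mem_image.mp ha
      obtain ⟨p', hp', rfl⟩ := mem_image.mp hb
      have h1 := hE₀col1 p hp
      have h2 := hE₀col1 p' hp'
      have : p.1 = p'.1 := by simp [hsh] at h; omega
      rw [hE₀col p hp p' hp' this]
    have hEcard : E.card + 1 = n := by
      rw [hE, Finset.card_image_of_injOn (fun a ha b hb h => hshinj a ha b hb h)]
      exact hE₀card
    have hEcolm : ∀ p ∈ E, p.1 < m := fun p hp => by
      have := mem_board.mp (hEb hp); omega
    -- circ C = A + circ E
    have hcircC : circ m C = (cset m C (0, ρ)).card + circ m E := by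
      rw [circ_eq_sum m C hCb hrow, ← Finset.sum_erase_add C _ hρ, ← hE₀]
      have h1 : ∀ p ∈ E₀, cset m C p = cset m E₀ p := by
        intro p hp
        rw [show C = insert (0, ρ) E₀ from (Finset.insert_erase hρ).symm]
        apply cset_insert
        rintro x hx ⟨h1, h2⟩
        have := hE₀col1 p hp
        simp only [Prod.fst] at h1
        omega
      rw [Finset.sum_congr rfl (fun p hp => congrArg Finset.card (h1 p hp))]
      have h2 : ∑ p ∈ E₀, (cset m E₀ p).card = circ m E := by
        rw [circ_eq_sum m E hEb hErow, hE, Finset.sum_image hshinj]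
        exact (Finset.sum_congr rfl fun p hp => cset_shift m E₀ hE₀b hE₀col1 p hp).symm
      rw [h2]
      omega
    have hA := row_top_count m ρ C hCb hcol hρ
    -- s + t + 1 = n
    have hstn : s + t + 1 = n := by
      have h1 := Finset.card_filter_add_card_filter_not
        (s := C) (p := fun p => p.2 < ρ)
      have h2 := Finset.card_filter_add_card_filter_not
        (s := C.filter (fun p => ¬ p.2 < ρ)) (p := fun p => ρ < p.2)
      rw [Finset.filter_filter, Finset.filter_filter] at h2
      have h3 : C.filter (fun p => ¬ p.2 < ρ ∧ ρ < p.2) = C.filter (fun p => ρ < p.2) :=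
        Finset.filter_congr (fun p _ => ⟨fun h => h.2, fun h => ⟨by omega, h⟩⟩)
      have h4 : C.filter (fun p => ¬ p.2 < ρ ∧ ¬ ρ < p.2) = {(0, ρ)} := by
        ext p
        simp only [mem_filter, mem_singleton]
        constructor
        · rintro ⟨hp, h5, h6⟩
          exact hrow p hp (0, ρ) hρ (by simp; omega)
        · rintro rfl
          exact ⟨hρ, by simp, by simp⟩
      rw [h3, h4, Finset.card_singleton] at h2
      rw [hCcard] at h1
      omega
    have hsρ : s ≤ ρ := by
      have : (C.filter (fun p => p.2 < ρ)).card ≤ (range ρ).card := by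
        apply Finset.card_le_card_of_injOn (fun p => p.2)
        · intro p hp
          exact mem_range.mpr (mem_filter.mp hp).2
        · intro a ha b hb h
          exact hrow a (by exact_mod_cast (mem_filter.mp (by exact_mod_cast ha)).1)
            b (by exact_mod_cast (mem_filter.mp (by exact_mod_cast hb)).1) h
      rw [Finset.card_range] at this
      exact this
    -- rewrite the index set of the sum
    have himage : E.image Prod.fst = E₀.image (fun p => p.1 - 1) := by
      rw [hE, Finset.image_image]
      rfl
    rw [← himage]
    -- pull out constants from each summand
    have hℓpos : (0 : ℝ) < 1 - q ^ (m - n + 1) := by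
      have : q ^ (m - n + 1) < 1 := pow_lt_one₀ hq0.le hq1 (by omega)
      linarith
    have hsummand : ∀ c' ∈ (range m).filter (fun c' => c' ∉ E.image Prod.fst),
        q ^ (-(circ m (insert (c', 0) E) : ℤ)) * ((1 - q) / (1 - q ^ (m - n + 1)))
            * q ^ (ρ - s)
          = q ^ (c' + (E.filter (fun p => c' < p.1)).card)
            * (q ^ ((1 : ℤ) - m - circ m E) * ((1 - q) / (1 - q ^ (m - n + 1)))
              * q ^ (ρ - s)) := by
      intro c' hc'
      have hc'm : c' < m := mem_range.mp (mem_filter.mp hc').1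
      have hstep := insert_zero_circ m c' hc'm E hEb hErow1 hErow hEcol
      have hexp : (-(circ m (insert (c', 0) E) : ℤ))
          = ((c' + (E.filter (fun p => c' < p.1)).card : ℕ) : ℤ)
            + ((1 : ℤ) - m - circ m E) := by
        push_cast
        omega
      rw [hexp, zpow_add₀ hqne, zpow_natCast]
      ring
    rw [Finset.sum_congr rfl hsummand, ← Finset.sum_mul,
      free_sum m n hn hm q E hEcard hEcolm hEcol]
    -- evaluate the geometric sum
    have hIcc : ∑ j ∈ Icc (n - 1) (m - 1), q ^ j
        = q ^ (n - 1) * ((q ^ (m - n + 1) - 1) / (q - 1)) := by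
      have hIco : Icc (n - 1) (m - 1) = Ico (n - 1) m := by
        rw [← Finset.Ico_add_one_right_eq_Icc]
        congr 1
        omega
      rw [hIco, Finset.sum_Ico_eq_sum_range, show m - (n - 1) = m - n + 1 by omega]
      rw [Finset.sum_congr rfl (fun i _ => pow_add q (n - 1) i), ← Finset.mul_sum,
        geom_sum_eq (ne_of_lt hq1)]
    rw [hIcc]
    have hGQ : ((q ^ (m - n + 1) - 1) / (q - 1)) * ((1 - q) / (1 - q ^ (m - n + 1)))
        = 1 := by
      rw [div_mul_div_comm, div_eq_one_iff_eq]
      · ring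
      · intro h
        apply absurd hℓpos
        simp only [not_lt]
        nlinarith [sub_ne_zero.mpr (ne_of_lt hq1)]
    calc q ^ (-(circ m C : ℤ))
        = q ^ (((n - 1 : ℕ) : ℤ)) * q ^ ((1 : ℤ) - m - circ m E)
            * q ^ (((ρ - s : ℕ) : ℤ)) := by
          rw [← zpow_add₀ hqne, ← zpow_add₀ hqne]
          congr 1
          omega
      _ = q ^ (n - 1) * ((q ^ (m - n + 1) - 1) / (q - 1))
            * (q ^ ((1 : ℤ) - m - circ m E) * ((1 - q) / (1 - q ^ (m - n + 1)))
              * q ^ (ρ - s)) := by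
          rw [zpow_natCast, zpow_natCast]
          calc q ^ (n - 1) * q ^ ((1 : ℤ) - m - circ m E) * q ^ (ρ - s)
              = ((q ^ (m - n + 1) - 1) / (q - 1) * ((1 - q) / (1 - q ^ (m - n + 1))))
                  * (q ^ (n - 1) * q ^ ((1 : ℤ) - m - circ m E) * q ^ (ρ - s)) := by
                rw [hGQ, one_mul]
            _ = _ := by ring
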